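/- Let f be a Boolean function on n bits and p ∈ (0,1). Then b(f,π_p) = s(f,π_p) if and only if f or 1−f is the parity function on some subset of the bits (equivalently, there is S ⊆ [n] and ε ∈ {0,1} with f(x) = ε ⊕ (⊕_{i∈S} x_i) for all x). -/

import Mathlib

open Classical

noncomputable section

/-- Flip the bits of `x` in the set `B`. -/
def flipOn {ι : Type*} [DecidableEq ι] (x : ι → Bool) (B : Finset ι) : ι → Bool :=
  fun i => if i ∈ B then !(x i) else x i

/-- Pointwise sensitivity of `f` at `x`. -/
def sensAt {ι : Type*} [Fintype ι] [DecidableEq ι] (f : (ι → Bool) → Bool)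
    (x : ι → Bool) : ℕ :=
  (Finset.univ.filter fun i => f (flipOn x {i}) ≠ f x).card

/-- Pointwise block sensitivity of `f` at `x`. -/
def bsAt {ι : Type*} [DecidableEq ι] (f : (ι → Bool) → Bool) (x : ι → Bool) : ℕ :=
  sSup {m | ∃ B : Fin m → Finset ι,
    (∀ j, f (flipOn x (B j)) ≠ f x) ∧ ∀ j k, j ≠ k → Disjoint (B j) (B k)}

/-- `W` is a witness set for `f` at `x`. -/
def IsWitness {ι : Type*} (f : (ι → Bool) → Bool) (x : ι → Bool) (W : Finset ι) : Prop :=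
  ∀ y, (∀ i ∈ W, y i = x i) → f y = f x

/-- Pointwise minimum witness size of `f` at `x`. -/
def witAt {ι : Type*} (f : (ι → Bool) → Bool) (x : ι → Bool) : ℕ :=
  sInf {k | ∃ W : Finset ι, W.card = k ∧ IsWitness f x W}

/-- Decision trees querying coordinates in `ι`. -/
inductive DTree (ι : Type*) where
  | leaf : DTree ι
  | node : ι → DTree ι → DTree ι → DTree ι

/-- The set of coordinates queried by the tree `T` on input `x`. -/
def DTree.path {ι : Type*} [DecidableEq ι] : DTree ι → (ι → Bool) → Finset ι
  | .leaf, _ => ∅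
  | .node i t0 t1, x => insert i (if x i then t1.path x else t0.path x)

/-- The tree `T` determines `f`: at each leaf the queried bits witness the value of `f`. -/
def DTree.Determines {ι : Type*} [DecidableEq ι] (T : DTree ι)
    (f : (ι → Bool) → Bool) : Prop :=
  ∀ x, IsWitness f x (T.path x)

/-- A partition of the hypercube into subcubes, encoded by the map sending each point to
the code (fixed coordinates) of its part. -/
structure SubcubePartition (ι : Type*) where
  code : (ι → Bool) → (ι → Option Bool)
  self_mem : ∀ x i b, code x i = some b → x i = b
  compat : ∀ x y, (∀ i b, code x i = some b → y i = b) → code y = code x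

/-- Number of coordinates fixed by the subcube containing `x`. -/
def SubcubePartition.codim {ι : Type*} [Fintype ι] (P : SubcubePartition ι)
    (x : ι → Bool) : ℕ :=
  (Finset.univ.filter fun i => (P.code x i).isSome).card

/-- The partition determines `f`, i.e. `f` is constant on each part. -/
def SubcubePartition.Determines {ι : Type*} (P : SubcubePartition ι)
    (f : (ι → Bool) → Bool) : Prop :=
  ∀ x y, (∀ i b, P.code x i = some b → y i = b) → f y = f x

/-- Deterministic sensitivity. -/
def detSens {ι : Type*} [Fintype ι] [DecidableEq ι] (f : (ι → Bool) → Bool) : ℕ :=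
  Finset.univ.sup fun x => sensAt f x

/-- Deterministic block sensitivity. -/
def detBS {ι : Type*} [Fintype ι] [DecidableEq ι] (f : (ι → Bool) → Bool) : ℕ :=
  Finset.univ.sup fun x => bsAt f x

/-- Deterministic witness complexity. -/
def detWit {ι : Type*} [Fintype ι] [DecidableEq ι] (f : (ι → Bool) → Bool) : ℕ :=
  Finset.univ.sup fun x => witAt f x

/-- Deterministic subcube partition complexity. -/
def detSC {ι : Type*} [Fintype ι] (f : (ι → Bool) → Bool) : ℕ :=
  sInf {k | ∃ P : SubcubePartition ι, P.Determines f ∧ ∀ x, P.codim x ≤ k}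

/-- Deterministic algorithmic (decision tree) complexity. -/
def detAlg {ι : Type*} [Fintype ι] [DecidableEq ι] (f : (ι → Bool) → Bool) : ℕ :=
  sInf {k | ∃ T : DTree ι, T.Determines f ∧ ∀ x, (T.path x).card ≤ k}

/-- Weight of the configuration `x` under the product Bernoulli(p) measure `π_p`. -/
def wt {ι : Type*} [Fintype ι] (p : ℝ) (x : ι → Bool) : ℝ :=
  ∏ i, (if x i then p else 1 - p)

/-- Expectation under `π_p`. -/
def expec {ι : Type*} [Fintype ι] [DecidableEq ι] (p : ℝ) (g : (ι → Bool) → ℝ) : ℝ :=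
  ∑ x, wt p x * g x

/-- Distributional sensitivity. -/
def distSens {ι : Type*} [Fintype ι] [DecidableEq ι] (f : (ι → Bool) → Bool) (p : ℝ) : ℝ :=
  expec p fun x => (sensAt f x : ℝ)

/-- Distributional block sensitivity. -/
def distBS {ι : Type*} [Fintype ι] [DecidableEq ι] (f : (ι → Bool) → Bool) (p : ℝ) : ℝ :=
  expec p fun x => (bsAt f x : ℝ)

/-- Distributional witness complexity. -/
def distWit {ι : Type*} [Fintype ι] [DecidableEq ι] (f : (ι → Bool) → Bool) (p : ℝ) : ℝ :=
  expec p fun x => (witAt f x : ℝ)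

/-- Distributional subcube partition complexity. -/
def distSC {ι : Type*} [Fintype ι] [DecidableEq ι] (f : (ι → Bool) → Bool) (p : ℝ) : ℝ :=
  sInf {c | ∃ P : SubcubePartition ι, P.Determines f ∧
    c = expec p fun x => (P.codim x : ℝ)}

/-- Distributional algorithmic complexity. -/
def distAlg {ι : Type*} [Fintype ι] [DecidableEq ι] (f : (ι → Bool) → Bool) (p : ℝ) : ℝ :=
  sInf {c | ∃ T : DTree ι, T.Determines f ∧
    c = expec p fun x => ((T.path x).card : ℝ)}

/-- `μ x J` is the joint probability that the bits equal `x` and the random set equals `J`;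
the conditions say: the marginal of the bits is `π_p`, the random set is a.s. a witness set
for `f`, and the random set is local (conditionally on `{I = J}` and the bits on `J`, the
bits outside `J` are still i.i.d. Bernoulli(p)). -/
def IsLocalWitnessSystem {ι : Type*} [Fintype ι] [DecidableEq ι]
    (f : (ι → Bool) → Bool) (p : ℝ) (μ : (ι → Bool) → Finset ι → ℝ) : Prop :=
  (∀ x J, 0 ≤ μ x J) ∧
  (∀ x, ∑ J, μ x J = wt p x) ∧
  (∀ x J, μ x J ≠ 0 → IsWitness f x J) ∧
  (∀ (J : Finset ι) x y, (∀ i ∈ J, x i = y i) → μ x J * wt p y = μ y J * wt p x)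

/-- Distributional local witness complexity. -/
def distLocal {ι : Type*} [Fintype ι] [DecidableEq ι]
    (f : (ι → Bool) → Bool) (p : ℝ) : ℝ :=
  sInf {c | ∃ μ : (ι → Bool) → Finset ι → ℝ, IsLocalWitnessSystem f p μ ∧
    c = ∑ x, ∑ J, μ x J * (J.card : ℝ)}

/-! ### Auxiliary lemmas for statement 6 -/

section Aux

variable {ι : Type*} [Fintype ι] [DecidableEq ι]

lemma flipOn_empty (x : ι → Bool) : flipOn x ∅ = x := by
  funext k; simp [flipOn]

lemma flipOn_flipOn (x : ι → Bool) (A B : Finset ι) :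
    flipOn (flipOn x A) B = flipOn x (symmDiff A B) := by
  funext k
  simp only [flipOn, Finset.mem_symmDiff]
  by_cases hA : k ∈ A <;> by_cases hB : k ∈ B <;> simp [hA, hB]

lemma flipOn_insert (x : ι → Bool) {a : ι} {D : Finset ι} (ha : a ∉ D) :
    flipOn x (insert a D) = flipOn (flipOn x D) {a} := by
  funext k
  simp only [flipOn, Finset.mem_insert, Finset.mem_singleton]
  by_cases h1 : k = a
  · subst h1
    simp [ha]
  · simp [h1]

/-- a family of `m` pairwise disjoint blocks each meeting `S` forces `m ≤ S.card`. -/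
lemma family_card_le {m : ℕ} (B : Fin m → Finset ι) (S : Finset ι)
    (hne : ∀ j, ((B j) ∩ S).Nonempty)
    (hd : ∀ j k, j ≠ k → Disjoint (B j) (B k)) : m ≤ S.card := by
  have hsub : (Finset.univ.biUnion fun j => B j ∩ S) ⊆ S := by
    intro i hi
    simp only [Finset.mem_biUnion] at hi
    obtain ⟨j, _, hj⟩ := hi
    exact (Finset.mem_inter.1 hj).2
  have hcard : (Finset.univ.biUnion fun j => B j ∩ S).card
      = ∑ j : Fin m, (B j ∩ S).card :=
    Finset.card_biUnion fun j _ k _ hjk =>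
      (hd j k hjk).mono Finset.inter_subset_left Finset.inter_subset_left
  calc m = ∑ _j : Fin m, 1 := by simp
    _ ≤ ∑ j : Fin m, (B j ∩ S).card :=
        Finset.sum_le_sum fun j _ => Finset.card_pos.2 (hne j)
    _ = _ := hcard.symm
    _ ≤ S.card := Finset.card_le_card hsub

lemma bsAt_bddAbove (f : (ι → Bool) → Bool) (x : ι → Bool) :
    BddAbove {m | ∃ B : Fin m → Finset ι,
      (∀ j, f (flipOn x (B j)) ≠ f x) ∧ ∀ j k, j ≠ k → Disjoint (B j) (B k)} := by
  refine ⟨Fintype.card ι, fun m hm => ?_⟩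
  obtain ⟨B, hB, hd⟩ := hm
  have := family_card_le B Finset.univ (fun j => ?_) hd
  · simpa using this
  · rw [Finset.inter_univ]
    rcases Finset.eq_empty_or_nonempty (B j) with h | h
    · exact absurd (by rw [h, flipOn_empty]) (hB j)
    · exact h

lemma le_bsAt (f : (ι → Bool) → Bool) (x : ι → Bool) {m : ℕ}
    (B : Fin m → Finset ι) (hB : ∀ j, f (flipOn x (B j)) ≠ f x)
    (hd : ∀ j k, j ≠ k → Disjoint (B j) (B k)) : m ≤ bsAt f x :=
  le_csSup (bsAt_bddAbove f x) ⟨B, hB, hd⟩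

lemma bsAt_le (f : (ι → Bool) → Bool) (x : ι → Bool) {k : ℕ}
    (h : ∀ m, (∃ B : Fin m → Finset ι,
      (∀ j, f (flipOn x (B j)) ≠ f x) ∧ ∀ j k, j ≠ k → Disjoint (B j) (B k)) → m ≤ k) :
    bsAt f x ≤ k := by
  apply csSup_le
  · exact ⟨0, Fin.elim0, fun j => j.elim0, fun j => j.elim0⟩
  · exact h

/-- the sensitive-coordinates set. -/
def sensSet (f : (ι → Bool) → Bool) (x : ι → Bool) : Finset ι :=
  Finset.univ.filter fun i => f (flipOn x {i}) ≠ f x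

lemma sensSet_card (f : (ι → Bool) → Bool) (x : ι → Bool) :
    (sensSet f x).card = sensAt f x := rfl

lemma mem_sensSet {f : (ι → Bool) → Bool} {x : ι → Bool} {i : ι} :
    i ∈ sensSet f x ↔ f (flipOn x {i}) ≠ f x := by
  simp [sensSet]

lemma sensAt_le_bsAt (f : (ι → Bool) → Bool) (x : ι → Bool) :
    sensAt f x ≤ bsAt f x := by
  set T := sensSet f x with hT
  have hcard : T.card = sensAt f x := rfl
  let e : Fin T.card → T := T.equivFin.symm
  have he : Function.Injective e := T.equivFin.symm.injective
  rw [← hcard]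
  refine le_bsAt f x (fun j => ({(e j : ι)} : Finset ι)) (fun j => ?_) (fun j k hjk => ?_)
  · exact mem_sensSet.1 (e j).2
  · rw [Finset.disjoint_singleton]
    intro h
    exact hjk (he (Subtype.ext h))

end Aux

section Aux2

variable {ι : Type*} [Fintype ι] [DecidableEq ι] {f : (ι → Bool) → Bool}

lemma bool_eq_of_ne_of_ne {a b c : Bool} (h1 : a ≠ c) (h2 : b ≠ c) : a = b := by
  cases a <;> cases b <;> cases c <;> simp_all

lemma flip_pair_left {x : ι → Bool} {i j : ι} (hij : i ≠ j) :
    flipOn (flipOn x {j}) {i} = flipOn x {i, j} := by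
  funext k
  by_cases hki : k = i <;> by_cases hkj : k = j <;>
    simp_all [flipOn, Finset.mem_insert, Finset.mem_singleton]

lemma flip_single_single {x : ι → Bool} (j : ι) :
    flipOn (flipOn x {j}) {j} = x := by
  funext k
  by_cases hkj : k = j <;> simp_all [flipOn]

lemma flip_pair_cancel {x : ι → Bool} {i j : ι} (hij : i ≠ j) :
    flipOn (flipOn x {j}) {i, j} = flipOn x {i} := by
  funext k
  by_cases hki : k = i <;> by_cases hkj : k = j <;>
    simp_all [flipOn, Finset.mem_insert, Finset.mem_singleton]

/-- Every sensitive block contains a sensitive coordinate (from `bs = s` pointwise). -/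
lemma star (h : ∀ x, bsAt f x = sensAt f x) :
    ∀ x (B : Finset ι), f (flipOn x B) ≠ f x → ∃ i ∈ B, f (flipOn x {i}) ≠ f x := by
  intro x B hB
  by_contra hc
  push_neg at hc
  set T := sensSet f x with hT
  let e : Fin T.card → T := T.equivFin.symm
  have he : Function.Injective e := T.equivFin.symm.injective
  set Bf : Fin (T.card + 1) → Finset ι :=
    fun j => if hj : (j : ℕ) < T.card then ({(e ⟨j, hj⟩ : ι)} : Finset ι) else B with hBf
  have hsens : ∀ j, f (flipOn x (Bf j)) ≠ f x := by
    intro j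
    by_cases hj : (j : ℕ) < T.card
    · rw [hBf]; simp only [hj, dif_pos]
      exact mem_sensSet.1 (e ⟨j, hj⟩).2
    · rw [hBf]; simp only [hj, dif_neg, not_false_iff]
      exact hB
  have hdisj : ∀ j k, j ≠ k → Disjoint (Bf j) (Bf k) := by
    intro j k hjk
    by_cases hj : (j : ℕ) < T.card <;> by_cases hk : (k : ℕ) < T.card
    · rw [hBf]; simp only [hj, hk, dif_pos]
      rw [Finset.disjoint_singleton]
      intro hkk
      apply hjk
      have h1 : (⟨(j : ℕ), hj⟩ : Fin T.card) = ⟨(k : ℕ), hk⟩ := he (Subtype.ext hkk)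
      have hv : (j : ℕ) = (k : ℕ) := by simpa using congrArg Fin.val h1
      exact Fin.ext hv
    · rw [hBf]; simp only [hj, hk, dif_pos, dif_neg, not_false_iff]
      rw [Finset.disjoint_singleton_left]
      intro hmem
      exact (mem_sensSet.1 (e ⟨j, hj⟩).2) (hc _ hmem)
    · rw [hBf]; simp only [hj, hk, dif_pos, dif_neg, not_false_iff]
      rw [Finset.disjoint_singleton_right]
      intro hmem
      exact (mem_sensSet.1 (e ⟨k, hk⟩).2) (hc _ hmem)
    · exfalso
      apply hjk
      have hj' : (j : ℕ) = T.card := by omega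
      have hk' : (k : ℕ) = T.card := by omega
      exact Fin.ext (hj'.trans hk'.symm)
  have hle : T.card + 1 ≤ bsAt f x := le_bsAt f x Bf hsens hdisj
  rw [h x, ← sensSet_card f x, ← hT] at hle
  omega

/-- the key local rigidity consequence. -/
lemma keyC (h : ∀ x, bsAt f x = sensAt f x) :
    ∀ (z : ι → Bool) (i j : ι), i ≠ j → f (flipOn z {j}) = f z →
      f (flipOn z {i, j}) = f z → f (flipOn z {i}) = f z := by
  intro z i j hij h1 h2
  by_contra hne
  set w := flipOn z {j} with hw
  have e1 : flipOn w {i, j} = flipOn z {i} := flip_pair_cancel hij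
  have e2 : flipOn w {i} = flipOn z {i, j} := flip_pair_left hij
  have e3 : flipOn w {j} = z := flip_single_single j
  have hsensB : f (flipOn w ({i, j} : Finset ι)) ≠ f w := by
    rw [e1, h1]; exact hne
  obtain ⟨k, hk, hks⟩ := star h w {i, j} hsensB
  rcases Finset.mem_insert.1 hk with rfl | hk'
  · rw [e2, h1] at hks
    exact hks h2
  · rw [Finset.mem_singleton.1 hk'] at hks
    rw [e3, h1] at hks
    exact hks rfl

lemma step_imp (h : ∀ x, bsAt f x = sensAt f x) :
    ∀ (x : ι → Bool) (j i : ι), f (flipOn x {i}) ≠ f x →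
      f (flipOn (flipOn x {j}) {i}) ≠ f (flipOn x {j}) := by
  intro x j i hi
  by_cases hij : i = j
  · subst hij
    rw [flip_single_single]
    exact fun hcc => hi hcc.symm
  · intro hcon
    rw [flip_pair_left hij] at hcon
    by_cases hj : f (flipOn x {j}) = f x
    · rw [hj] at hcon
      exact hi (keyC h x i j hij hj hcon)
    · set z := flipOn x {i} with hz
      have ez1 : flipOn z {j} = flipOn x {i, j} := by
        rw [hz]
        funext k
        by_cases hki : k = i <;> by_cases hkj : k = j <;>
          simp_all [flipOn, Finset.mem_insert, Finset.mem_singleton]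
      have ez2 : flipOn z {i, j} = flipOn x {j} := by
        rw [hz]
        funext k
        by_cases hki : k = i <;> by_cases hkj : k = j <;>
          simp_all [flipOn, Finset.mem_insert, Finset.mem_singleton]
      have ez3 : flipOn z {i} = x := flip_single_single i
      have hz1 : f (flipOn z {j}) = f z := by
        rw [ez1, hcon, hz]
        exact bool_eq_of_ne_of_ne hj hi
      have hz2 : f (flipOn z {i, j}) = f z := by
        rw [ez2, hz]
        exact bool_eq_of_ne_of_ne hj hi
      have hfin := keyC h z i j hij hz1 hz2
      rw [ez3] at hfin
      exact hi hfin.symm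

lemma step_iff (h : ∀ x, bsAt f x = sensAt f x) (x : ι → Bool) (j i : ι) :
    f (flipOn x {i}) ≠ f x ↔ f (flipOn (flipOn x {j}) {i}) ≠ f (flipOn x {j}) := by
  constructor
  · exact step_imp h x j i
  · intro hi
    have h2 := step_imp h (flipOn x {j}) j i hi
    rwa [flip_single_single] at h2

lemma sens_iff_flipD (h : ∀ x, bsAt f x = sensAt f x) (D : Finset ι) :
    ∀ (x : ι → Bool) (i : ι),
      (f (flipOn x {i}) ≠ f x ↔ f (flipOn (flipOn x D) {i}) ≠ f (flipOn x D)) := by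
  induction D using Finset.induction_on with
  | empty => intro x i; rw [flipOn_empty]
  | insert _ _ ha =>
      rename_i a D' ih
      intro x i
      rw [flipOn_insert x ha]
      exact (ih x i).trans (step_iff h (flipOn x D') a i)

lemma sens_const (h : ∀ x, bsAt f x = sensAt f x) (x y : ι → Bool) (i : ι) :
    f (flipOn x {i}) ≠ f x ↔ f (flipOn y {i}) ≠ f y := by
  set D : Finset ι := Finset.univ.filter fun k => x k ≠ y k with hD
  have hxy : flipOn x D = y := by
    funext k
    by_cases hk : x k = y k
    · have hkD : k ∉ D := by simp [hD, hk]
      simp [flipOn, hkD, hk]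
    · have hkD : k ∈ D := by simp [hD, hk]
      simp only [flipOn, hkD, if_pos]
      cases hxk : x k <;> cases hyk : y k <;> simp_all
  have h3 := sens_iff_flipD h D x i
  rwa [hxy] at h3

lemma pointwise_parity (h : ∀ x, bsAt f x = sensAt f x) :
    ∃ (S : Finset ι) (ε : Bool),
      ∀ x, f x = xor ε (decide (Odd (S.filter fun i => x i = true).card)) := by
  classical
  set x₀ : ι → Bool := fun _ => false with hx₀
  set S := sensSet f x₀ with hS
  set ε := f x₀ with hε
  have hSmem : ∀ (y : ι → Bool) (i : ι), i ∈ S ↔ f (flipOn y {i}) ≠ f y := by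
    intro y i
    rw [hS, mem_sensSet]
    exact sens_const h x₀ y i
  have claim : ∀ T : Finset ι,
      f (flipOn x₀ T) = xor ε (decide (Odd ((S ∩ T).card))) := by
    intro T
    induction T using Finset.induction_on with
    | empty => simp [flipOn_empty, hε]
    | insert _ _ ha =>
        rename_i a T' ih
        rw [flipOn_insert x₀ ha]
        by_cases haS : a ∈ S
        · have hne := (hSmem (flipOn x₀ T') a).1 haS
          have hval : f (flipOn (flipOn x₀ T') {a}) = !(f (flipOn x₀ T')) := by
            cases h1 : f (flipOn (flipOn x₀ T') {a}) <;>
              cases h2 : f (flipOn x₀ T') <;> simp_all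
          have hins : S ∩ insert a T' = insert a (S ∩ T') := by
            ext k
            simp only [Finset.mem_inter, Finset.mem_insert]
            constructor
            · rintro ⟨hkS, rfl | hkT⟩
              · exact Or.inl rfl
              · exact Or.inr ⟨hkS, hkT⟩
            · rintro (rfl | ⟨hkS, hkT⟩)
              · exact ⟨haS, Or.inl rfl⟩
              · exact ⟨hkS, Or.inr hkT⟩
          have hnotmem : a ∉ S ∩ T' := fun hmm => ha (Finset.mem_inter.1 hmm).2
          rw [hval, ih, hins, Finset.card_insert_of_notMem hnotmem]
          by_cases hodd : Odd ((S ∩ T').card) <;>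
            simp [hodd, Nat.odd_add_one, ← Nat.not_odd_iff_even] <;> cases ε <;> simp
        · have heq : f (flipOn (flipOn x₀ T') {a}) = f (flipOn x₀ T') := by
            by_contra hcc
            exact haS ((hSmem (flipOn x₀ T') a).2 hcc)
          have hins : S ∩ insert a T' = S ∩ T' := by
            ext k
            simp only [Finset.mem_inter, Finset.mem_insert]
            constructor
            · rintro ⟨hkS, rfl | hkT⟩
              · exact absurd hkS haS
              · exact ⟨hkS, hkT⟩
            · rintro ⟨hkS, hkT⟩
              exact ⟨hkS, Or.inr hkT⟩
          rw [heq, ih, hins]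
  refine ⟨S, ε, fun x => ?_⟩
  set T : Finset ι := Finset.univ.filter fun i => x i = true with hT
  have hx : flipOn x₀ T = x := by
    funext k
    by_cases hk : x k = true
    · have hkT : k ∈ T := by simp [hT, hk]
      simp [flipOn, hkT, hx₀, hk]
    · have h1 : k ∉ T := by simp [hT, hk]
      have h2 : x k = false := by cases hxx : x k <;> simp_all
      simp [flipOn, h1, hx₀, h2]
  have hST : S.filter (fun i => x i = true) = S ∩ T := by
    ext k
    simp [hT, Finset.mem_inter, Finset.mem_filter]
  rw [hST, ← hx, claim T]

end Aux2

section Aux3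

variable {ι : Type*} [Fintype ι] [DecidableEq ι] {f : (ι → Bool) → Bool}

lemma odd_iff_zmod (n : ℕ) : Odd n ↔ (n : ZMod 2) = 1 := by
  rw [Nat.odd_iff, ← ZMod.natCast_mod n 2]
  rcases Nat.mod_two_eq_zero_or_one n with h | h <;> rw [h] <;> simp <;> decide

lemma card_filter_zmod (S : Finset ι) (p : ι → Prop) [DecidablePred p] :
    ((S.filter p).card : ZMod 2) = ∑ i ∈ S, (if p i then (1 : ZMod 2) else 0) := by
  rw [Finset.card_filter]
  push_cast
  rfl

lemma parity_flip {S : Finset ι} {ε : Bool}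
    (hf : ∀ x, f x = xor ε (decide (Odd (S.filter fun i => x i = true).card)))
    (x : ι → Bool) (B : Finset ι) :
    (f (flipOn x B) ≠ f x) ↔ Odd ((S ∩ B).card) := by
  have hSB : S ∩ B = S.filter (· ∈ B) := by
    ext k; simp [Finset.mem_inter, Finset.mem_filter]
  have key : ((S.filter fun i => flipOn x B i = true).card : ZMod 2)
      = ((S.filter fun i => x i = true).card : ZMod 2) + ((S ∩ B).card : ZMod 2) := by
    rw [card_filter_zmod, card_filter_zmod, hSB, card_filter_zmod,
      ← Finset.sum_add_distrib]
    apply Finset.sum_congr rfl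
    intro i _
    by_cases hB : i ∈ B <;> cases hx : x i <;> simp [flipOn, hB, hx] <;> decide
  rw [hf (flipOn x B), hf x]
  have hxor : ∀ (a b : Bool), (xor ε a ≠ xor ε b) ↔ a ≠ b := by
    intro a b; cases ε <;> cases a <;> cases b <;> simp
  rw [hxor, Ne, decide_eq_decide, odd_iff_zmod, odd_iff_zmod, odd_iff_zmod, key]
  generalize ((S.filter fun i => x i = true).card : ZMod 2) = u
  generalize (((S ∩ B).card : ℕ) : ZMod 2) = v
  revert u v; decide

lemma sensAt_parity {S : Finset ι} {ε : Bool}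
    (hf : ∀ x, f x = xor ε (decide (Odd (S.filter fun i => x i = true).card)))
    (x : ι → Bool) : sensAt f x = S.card := by
  unfold sensAt
  congr 1
  ext i
  rw [Finset.mem_filter]
  simp only [Finset.mem_univ, true_and]
  rw [parity_flip hf]
  by_cases hi : i ∈ S
  · have h1 : S ∩ ({i} : Finset ι) = {i} := by
      ext k; simp only [Finset.mem_inter, Finset.mem_singleton]
      constructor
      · exact fun hh => hh.2
      · rintro rfl; exact ⟨hi, rfl⟩
    simp [h1, hi]
  · have h1 : S ∩ ({i} : Finset ι) = ∅ := by
      ext k; simp only [Finset.mem_inter, Finset.mem_singleton, Finset.notMem_empty,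
        iff_false, not_and]
      rintro hk rfl; exact hi hk
    simp [h1, hi]

lemma bsAt_parity {S : Finset ι} {ε : Bool}
    (hf : ∀ x, f x = xor ε (decide (Odd (S.filter fun i => x i = true).card)))
    (x : ι → Bool) : bsAt f x = S.card := by
  apply le_antisymm
  · apply bsAt_le
    intro m hm
    obtain ⟨B, hB, hd⟩ := hm
    apply family_card_le B S _ hd
    intro j
    have hodd := (parity_flip hf x (B j)).1 (hB j)
    have hne : (S ∩ B j) ≠ ∅ := by
      intro hz
      rw [hz] at hodd
      simp at hodd
    rw [Finset.inter_comm] at hne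
    exact Finset.nonempty_of_ne_empty hne
  · rw [← sensAt_parity hf x]
    exact sensAt_le_bsAt f x

lemma wt_pos {p : ℝ} (hp0 : 0 < p) (hp1 : p < 1) (x : ι → Bool) : 0 < wt p x := by
  unfold wt
  apply Finset.prod_pos
  intro i _
  by_cases h : x i <;> simp [h] <;> linarith

end Aux3

/-- `b(f,π_p) = s(f,π_p)` iff `f` or `1 - f` is the parity function on some
subset of the bits, i.e. `f(x) = ε ⊕ (⊕_{i ∈ S} x_i)` for some `S ⊆ [n]`, `ε ∈ {0,1}`. -/
theorem bs_eq_sens_iff_parity (n : ℕ) (f : (Fin n → Bool) → Bool) (p : ℝ)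
    (hp0 : 0 < p) (hp1 : p < 1) :
    distBS f p = distSens f p ↔
      ∃ (S : Finset (Fin n)) (ε : Bool),
        ∀ x, f x = xor ε (decide (Odd (S.filter fun i => x i = true).card)) := by
  constructor
  · intro h
    apply pointwise_parity
    intro x
    have hle : ∀ y : Fin n → Bool, (sensAt f y : ℝ) ≤ (bsAt f y : ℝ) := by
      intro y; exact_mod_cast sensAt_le_bsAt f y
    have hsum : ∑ y : Fin n → Bool, wt p y * ((bsAt f y : ℝ) - (sensAt f y : ℝ)) = 0 := by
      have h2 : ∑ y : Fin n → Bool, wt p y * ((bsAt f y : ℝ) - (sensAt f y : ℝ))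
          = (∑ y : Fin n → Bool, wt p y * (bsAt f y : ℝ))
            - ∑ y : Fin n → Bool, wt p y * (sensAt f y : ℝ) := by
        rw [← Finset.sum_sub_distrib]
        apply Finset.sum_congr rfl
        intro y _
        ring
      rw [h2]
      have h3 : distBS f p = distSens f p := h
      unfold distBS distSens expec at h3
      rw [h3]
      ring
    have hterm := (Finset.sum_eq_zero_iff_of_nonneg ?_).1 hsum x (Finset.mem_univ x)
    · rcases mul_eq_zero.1 hterm with h4 | h4
      · exact absurd h4 (ne_of_gt (wt_pos hp0 hp1 x))
      · have h5 : (bsAt f x : ℝ) = (sensAt f x : ℝ) := by linarith [sub_eq_zero.1 h4]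
        exact_mod_cast h5
    · intro y _
      exact mul_nonneg (le_of_lt (wt_pos hp0 hp1 y)) (by linarith [hle y])
  · rintro ⟨S, ε, hf⟩
    unfold distBS distSens expec
    apply Finset.sum_congr rfl
    intro x _
    simp only []
    rw [show bsAt f x = sensAt f x from (bsAt_parity hf x).trans (sensAt_parity hf x).symm]
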